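/- Let A be a commutative ring, M a free A-module with basis ω^{(0)}, …, ω^{(m+2)}, and let N ⊆ M be the submodule generated by the elements β_i := p ω^{(2+i)} − c_i ω^{(1+i)} + ω^{(i)} for i = 0, …, m, where c_i ∈ A and p ∈ A. Then the natural map from the free submodule spanned by ω^{(0)}, ω^{(1)} into M/N is injective, and the cokernel of this map is annihilated by p^{m+1}. -/

import Mathlib

/-- Let `M` be a free `A`-module with basis `ω⁽⁰⁾,…,ω⁽ᵐ⁺²⁾` and `N ⊆ M` the submodule
generated by `βᵢ = p ω⁽²⁺ⁱ⁾ − cᵢ ω⁽¹⁺ⁱ⁾ + ω⁽ⁱ⁾`, `i = 0,…,m`.  Then the natural map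
from the span of `ω⁽⁰⁾, ω⁽¹⁾` into `M/N` is injective, and its cokernel is annihilated
by `p^{m+1}`. -/
theorem span_first_two_injective_and_cokernel_annihilated
    (A : Type*) [CommRing A] (p : ℕ) (hp : p.Prime)
    (hreg : ∀ a : A, (p : A) * a = 0 → a = 0)
    (m : ℕ) (c : Fin (m + 1) → A) :
    let e : Fin (m + 3) → (Fin (m + 3) → A) := fun i => Pi.single i 1
    let N : Submodule A (Fin (m + 3) → A) :=
      Submodule.span A (Set.range fun i : Fin (m + 1) =>
        (p : A) • e ⟨(i : ℕ) + 2, by have := i.isLt; omega⟩ -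
          c i • e ⟨(i : ℕ) + 1, by have := i.isLt; omega⟩ +
          e ⟨(i : ℕ), by have := i.isLt; omega⟩)
    let P : Submodule A (Fin (m + 3) → A) := Submodule.span A {e 0, e 1}
    (∀ x ∈ P, x ∈ N → x = 0) ∧
    (∀ x : Fin (m + 3) → A, ∃ y ∈ P, (p : A) ^ (m + 1) • x - y ∈ N) := by
  intro e N P
  have he : ∀ (u v : Fin (m + 3)), e u v = if v = u then 1 else 0 := by
    intro u v
    simp [e, Pi.single_apply]
  constructor
  · -- injectivity
    intro x hxP hxN
    obtain ⟨r, s, hrs⟩ := Submodule.mem_span_pair.mp hxP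
    obtain ⟨a, ha⟩ := (Submodule.mem_span_range_iff_exists_fun A).mp hxN
    -- key coordinate computation
    have key : ∀ i : Fin (m + 1),
        (∀ i' : Fin (m + 1), (i : ℕ) < (i' : ℕ) → a i' = 0) → a i = 0 := by
      intro i hz
      have hlt : (i : ℕ) + 2 < m + 3 := by omega
      have hx0 : x ⟨(i : ℕ) + 2, hlt⟩ = 0 := by
        rw [← hrs]
        simp only [Pi.add_apply, Pi.smul_apply, smul_eq_mul, he]
        have h0 : (⟨(i : ℕ) + 2, hlt⟩ : Fin (m + 3)) ≠ 0 := by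
          exact Fin.ne_of_val_ne (by simp only [Fin.val_zero]; omega)
        have h1 : (⟨(i : ℕ) + 2, hlt⟩ : Fin (m + 3)) ≠ 1 := by
          simp [Fin.ext_iff]
        rw [if_neg h0, if_neg h1]
        ring
      have hsum := congrFun ha ⟨(i : ℕ) + 2, hlt⟩
      rw [Finset.sum_apply] at hsum
      have hterm : ∀ i' : Fin (m + 1), i' ∈ Finset.univ → i' ≠ i →
          (a i' • ((p : A) • e ⟨(i' : ℕ) + 2, by omega⟩ -
            c i' • e ⟨(i' : ℕ) + 1, by omega⟩ +
            e ⟨(i' : ℕ), by omega⟩)) ⟨(i : ℕ) + 2, hlt⟩ = 0 := by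
        intro i' _ hne
        by_cases hgt : (i : ℕ) < (i' : ℕ)
        · rw [hz i' hgt]
          simp
        · have h2 : (i' : ℕ) < (i : ℕ) := by
            rcases lt_or_eq_of_le (not_lt.mp hgt) with h | h
            · exact h
            · exact absurd (Fin.ext h) hne
          simp only [Pi.smul_apply, Pi.add_apply, Pi.sub_apply, smul_eq_mul, he]
          rw [if_neg (by simp [Fin.ext_iff]; omega), if_neg (by simp [Fin.ext_iff]; omega),
            if_neg (by simp [Fin.ext_iff]; omega)]
          ring
      rw [Finset.sum_eq_single i hterm (by simp)] at hsum
      simp only [Pi.smul_apply, Pi.add_apply, Pi.sub_apply, smul_eq_mul, he,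
        Fin.mk.injEq, if_true] at hsum
      rw [if_neg (by omega), if_neg (by omega), hx0] at hsum
      apply hreg
      rw [mul_comm]
      rw [← hsum]
      ring
    have all0 : ∀ n : ℕ, ∀ i : Fin (m + 1), m + 1 ≤ (i : ℕ) + n → a i = 0 := by
      intro n
      induction n with
      | zero => intro i h; exact absurd i.isLt (by omega)
      | succ n ih =>
        intro i h
        exact key i (fun i' hi' => ih i' (by omega))
    have haz : ∀ i, a i = 0 := fun i => all0 (m + 1) i (by omega)
    rw [← ha]
    exact Finset.sum_eq_zero fun i _ => by rw [haz i, zero_smul]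
  · -- cokernel annihilated by p^{m+1}
    have hβ : ∀ i : Fin (m + 1),
        ((p : A) • e ⟨(i : ℕ) + 2, by omega⟩ - c i • e ⟨(i : ℕ) + 1, by omega⟩ +
          e ⟨(i : ℕ), by omega⟩) ∈ N :=
      fun i => Submodule.subset_span ⟨i, rfl⟩
    have key : ∀ k : ℕ, ∀ j : Fin (m + 3), (j : ℕ) ≤ k + 1 →
        ∃ y ∈ P, (p : A) ^ k • e j - y ∈ N := by
      intro k
      induction k with
      | zero =>
        intro j hj
        refine ⟨e j, ?_, by simp⟩
        have : j = 0 ∨ j = 1 := by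
          rcases Nat.le_one_iff_eq_zero_or_eq_one.mp hj with h | h
          · exact Or.inl (Fin.ext h)
          · exact Or.inr (Fin.ext h)
        rcases this with h | h <;> rw [h] <;>
          exact Submodule.subset_span (by simp)
      | succ k ih =>
        intro j hj
        by_cases hle : (j : ℕ) ≤ k + 1
        · obtain ⟨y, hyP, hyN⟩ := ih j hle
          refine ⟨(p : A) • y, P.smul_mem _ hyP, ?_⟩
          have : (p : A) ^ (k + 1) • e j - (p : A) • y
              = (p : A) • ((p : A) ^ k • e j - y) := by
            rw [smul_sub, smul_smul, ← pow_succ']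
          rw [this]
          exact N.smul_mem _ hyN
        · have hj2 : 2 ≤ (j : ℕ) := by omega
          have hi : (j : ℕ) - 2 < m + 1 := by omega
          set I : Fin (m + 1) := ⟨(j : ℕ) - 2, hi⟩ with hI
          have hi1 : (I : ℕ) + 1 < m + 3 := by omega
          have hi0 : (I : ℕ) < m + 3 := by omega
          obtain ⟨y1, hy1P, hy1N⟩ := ih ⟨(I : ℕ) + 1, hi1⟩ (by simp [hI]; omega)
          obtain ⟨y2, hy2P, hy2N⟩ := ih ⟨(I : ℕ), hi0⟩ (by simp [hI]; omega)
          refine ⟨c I • y1 - y2, P.sub_mem (P.smul_mem _ hy1P) hy2P, ?_⟩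
          have hje : (⟨(I : ℕ) + 2, by omega⟩ : Fin (m + 3)) = j :=
            Fin.ext (by simp [hI]; omega)
          have hβ' := hβ I
          rw [hje] at hβ'
          have hid : (p : A) ^ (k + 1) • e j - (c I • y1 - y2)
              = (p : A) ^ k • ((p : A) • e j -
                  c I • e ⟨(I : ℕ) + 1, hi1⟩ + e ⟨(I : ℕ), hi0⟩)
                + c I • ((p : A) ^ k • e ⟨(I : ℕ) + 1, hi1⟩ - y1)
                - ((p : A) ^ k • e ⟨(I : ℕ), hi0⟩ - y2) := by
            funext t
            simp only [Pi.add_apply, Pi.sub_apply, Pi.smul_apply, smul_eq_mul]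
            ring
          rw [hid]
          exact N.sub_mem (N.add_mem (N.smul_mem _ hβ') (N.smul_mem _ hy1N)) hy2N
    intro x
    have hx : x = ∑ j : Fin (m + 3), x j • e j := by
      funext t
      rw [Finset.sum_apply]
      simp [he, Finset.sum_ite_eq]
    choose y hyP hyN using fun j => key (m + 1) j (by omega)
    refine ⟨∑ j : Fin (m + 3), x j • y j,
      Submodule.sum_mem _ (fun j _ => P.smul_mem _ (hyP j)), ?_⟩
    have hrw : (p : A) ^ (m + 1) • x - ∑ j : Fin (m + 3), x j • y j
        = ∑ j : Fin (m + 3), x j • ((p : A) ^ (m + 1) • e j - y j) := by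
      nth_rewrite 1 [hx]
      rw [Finset.smul_sum, ← Finset.sum_sub_distrib]
      exact Finset.sum_congr rfl fun j _ => by rw [smul_sub, smul_comm]
    rw [hrw]
    exact Submodule.sum_mem _ fun j _ => N.smul_mem _ (hyN j)
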